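/- Let K be a field and C a small K-linear category admitting a separability family a. Let M : C ⥤ ModuleCat K be an additive K-linear functor (a left C-module). For each object x, let φ_x : ⊕_y (Hom_C(y,x) ⊗[K] M(y)) → M(x) be the K-linear map induced on each summand by f ⊗ m ↦ M(f)(m). Then there exists a family of K-linear maps ψ_x : M(x) → ⊕_y (Hom_C(y,x) ⊗[K] M(y)) such that (1) φ_x ∘ ψ_x = id_{M(x)} for every object x, and (2) the family ψ is a morphism of left C-modules: for every morphism f : z ⟶ x of C and every m ∈ M(z), ψ_x(M(f)(m)) is obtained from ψ_z(m) by applying postcomposition with f on each first tensor factor Hom_C(y,z) → Hom_C(y,x). -/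

import Mathlib

open CategoryTheory TensorProduct

/-- Composition as a `K`-linear map out of the tensor product of Hom spaces:
`h ⊗ k ↦ h ∘ k = k ≫ h`. -/
noncomputable def compMap (K : Type*) [Field K] {C : Type*} [Category C] [Preadditive C]
    [Linear K C] (X Y Z : C) : ((Z ⟶ X) ⊗[K] (Y ⟶ Z)) →ₗ[K] (Y ⟶ X) :=
  TensorProduct.lift (LinearMap.mk₂ K (fun (h : Z ⟶ X) (k : Y ⟶ Z) => k ≫ h)
    (fun h h' k => by simp) (fun r h k => by simp)
    (fun h k k' => by simp) (fun r h k => by simp))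

/-- A separability family for a `K`-linear category `C`. -/
structure SeparabilityFamily (K : Type*) [Field K] (C : Type*) [Category C] [Preadditive C]
    [Linear K C] where
  a : ∀ x y : C, (y ⟶ x) ⊗[K] (x ⟶ y)
  finite_support : ∀ x : C, {y : C | a x y ≠ 0}.Finite
  sum_comp : ∀ x : C, (∑ᶠ y : C, compMap K x x y (a x y)) = 𝟙 x
  compat : ∀ {x z : C} (f : x ⟶ z) (y : C),
    LinearMap.rTensor (x ⟶ y) (Linear.rightComp K y f) (a x y)
      = LinearMap.lTensor (y ⟶ z) (Linear.leftComp K y f) (a z y)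

/-- The action of `C` on a left `C`-module `M` as a linear map
`Hom(y,x) ⊗ M(y) → M(x)`, `f ⊗ m ↦ M(f)(m)`. -/
noncomputable def actionMap (K : Type*) [Field K] {C : Type*} [Category C] [Preadditive C]
    [Linear K C] (M : C ⥤ ModuleCat K) [M.Additive] [M.Linear K] (x y : C) :
    ((y ⟶ x) ⊗[K] M.obj y) →ₗ[K] M.obj x :=
  TensorProduct.lift (LinearMap.mk₂ K (fun (f : y ⟶ x) (m : M.obj y) => M.map f m)
    (fun f f' m => by simp) (fun r f m => by simp)
    (fun f m m' => by simp) (fun r f m => by simp))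

section Aux

variable (K : Type*) [Field K] {C : Type*} [Category C] [Preadditive C]
    [Linear K C] (M : C ⥤ ModuleCat K) [M.Additive] [M.Linear K]

/-- Auxiliary bilinear gadget: `g ⊗ h ↦ (m ↦ g ⊗ M(h)(m))`. -/
noncomputable def auxMap (w v y : C) :
    ((y ⟶ w) ⊗[K] (v ⟶ y)) →ₗ[K] (M.obj v →ₗ[K] ((y ⟶ w) ⊗[K] M.obj y)) :=
  TensorProduct.lift (LinearMap.mk₂ K
    (fun (g : y ⟶ w) (h : v ⟶ y) => (TensorProduct.mk K (y ⟶ w) (M.obj y) g).comp (M.map h).hom)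
    (fun g g' h => by ext m; simp [TensorProduct.add_tmul])
    (fun r g h => by ext m; simp [TensorProduct.smul_tmul'])
    (fun g h h' => by
      ext m
      dsimp
      rw [M.map_add]
      rw [show ((M.map h + M.map h') m) = M.map h m + M.map h' m from rfl]
      simp [TensorProduct.tmul_add])
    (fun r g h => by
      ext m
      dsimp
      rw [M.map_smul]
      rw [show (((r • M.map h : M.obj v ⟶ M.obj y)) m) = r • M.map h m from rfl]
      simp [TensorProduct.tmul_smul]))

/-- Evaluation of the functor at a fixed element, as an additive map on Hom. -/
def evalHom (v w : C) (m : M.obj v) : (v ⟶ w) →+ M.obj w :=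
  AddMonoidHom.mk' (fun h => M.map h m) (fun h h' => by
    show (M.map (h + h')) m = M.map h m + M.map h' m
    rw [M.map_add]
    rfl)

lemma action_aux (x y : C) (t : (y ⟶ x) ⊗[K] (x ⟶ y)) (m : M.obj x) :
    actionMap K M x y (auxMap K M x x y t m) = evalHom K M x x m (compMap K x x y t) := by
  induction t using TensorProduct.induction_on with
  | zero => simp
  | tmul g h =>
      show M.map g (M.map h m) = M.map (h ≫ g) m
      rw [M.map_comp]
      rfl
  | add t t' ht ht' =>
      simp only [map_add, LinearMap.add_apply, ht, ht']

lemma auxA (x z y : C) (f : z ⟶ x) (t : (y ⟶ x) ⊗[K] (x ⟶ y)) (m : M.obj z) :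
    auxMap K M x x y t (M.map f m)
      = auxMap K M x z y (LinearMap.lTensor (y ⟶ x) (Linear.leftComp K y f) t) m := by
  induction t using TensorProduct.induction_on with
  | zero => simp
  | tmul g h =>
      show g ⊗ₜ[K] (M.map h (M.map f m)) = g ⊗ₜ[K] (M.map (f ≫ h) m)
      rw [M.map_comp]
      rfl
  | add t t' ht ht' =>
      simp only [map_add, LinearMap.add_apply, ht, ht']

lemma auxB (x z y : C) (f : z ⟶ x) (u : (y ⟶ z) ⊗[K] (z ⟶ y)) (m : M.obj z) :
    auxMap K M x z y (LinearMap.rTensor (z ⟶ y) (Linear.rightComp K y f) u) m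
      = LinearMap.rTensor (M.obj y) (Linear.rightComp K y f) (auxMap K M z z y u m) := by
  induction u using TensorProduct.induction_on with
  | zero => simp
  | tmul g h => rfl
  | add u u' hu hu' =>
      simp only [map_add, LinearMap.add_apply, hu, hu']

end Aux

/-- If `C` admits a separability family, then for every left `C`-module `M` the canonical
map `⊕_y (Hom(y,x) ⊗ M(y)) → M(x)` admits a section `ψ` which is a morphism of left
`C`-modules. -/
theorem sepFamily_module_section (K : Type*) [Field K]
    (C : Type*) [SmallCategory C] [DecidableEq C] [Preadditive C] [Linear K C]
    (s : SeparabilityFamily K C)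
    (M : C ⥤ ModuleCat K) [M.Additive] [M.Linear K] :
    ∃ ψ : (∀ x : C, M.obj x →ₗ[K] DirectSum C (fun y : C => (y ⟶ x) ⊗[K] M.obj y)),
      (∀ x : C,
        (DirectSum.toModule K C (M.obj x) (fun y => actionMap K M x y)).comp (ψ x) =
          LinearMap.id) ∧
      (∀ (z x : C) (f : z ⟶ x) (m : M.obj z),
        ψ x (M.map f m) =
          DirectSum.toModule K C (DirectSum C (fun y : C => (y ⟶ x) ⊗[K] M.obj y))
            (fun y => (DirectSum.lof K C (fun y : C => (y ⟶ x) ⊗[K] M.obj y) y).comp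
              (LinearMap.rTensor (M.obj y) (Linear.rightComp K y f)))
            (ψ z m)) := by
  classical
  set T : C → Finset C := fun x => (s.finite_support x).toFinset with hT
  refine ⟨fun x => ∑ y ∈ T x,
      (DirectSum.lof K C (fun y : C => (y ⟶ x) ⊗[K] M.obj y) y).comp
        (auxMap K M x x y (s.a x y)), ?_, ?_⟩
  · intro x
    apply LinearMap.ext
    intro m
    rw [LinearMap.comp_apply, LinearMap.id_apply, LinearMap.sum_apply, map_sum]
    have step : ∀ y ∈ T x,
        (DirectSum.toModule K C (M.obj x) (fun y => actionMap K M x y))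
          (((DirectSum.lof K C (fun y : C => (y ⟶ x) ⊗[K] M.obj y) y).comp
            (auxMap K M x x y (s.a x y))) m)
        = evalHom K M x x m (compMap K x x y (s.a x y)) := by
      intro y _
      rw [LinearMap.comp_apply, DirectSum.toModule_lof, action_aux]
    rw [Finset.sum_congr rfl step, ← map_sum]
    have hsub : Function.support (fun y => compMap K x x y (s.a x y)) ⊆ ↑(T x) := by
      intro y hy
      simp only [hT, Set.Finite.coe_toFinset, Set.mem_setOf_eq]
      intro h0
      apply hy
      simp [h0]
    rw [← finsum_eq_sum_of_support_subset _ hsub, s.sum_comp]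
    show M.map (𝟙 x) m = m
    rw [M.map_id]
    rfl
  · intro z x f m
    have key : ∀ y : C,
        auxMap K M x x y (s.a x y) (M.map f m)
          = LinearMap.rTensor (M.obj y) (Linear.rightComp K y f)
              (auxMap K M z z y (s.a z y) m) := by
      intro y
      rw [auxA, ← s.compat f y, auxB]
    set G : C → DirectSum C (fun y : C => (y ⟶ x) ⊗[K] M.obj y) := fun y =>
      DirectSum.lof K C (fun y : C => (y ⟶ x) ⊗[K] M.obj y) y
        (LinearMap.rTensor (M.obj y) (Linear.rightComp K y f)
          (auxMap K M z z y (s.a z y) m)) with hG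
    have hGx : Function.support G ⊆ ↑(T x) := by
      intro y hy
      simp only [hT, Set.Finite.coe_toFinset, Set.mem_setOf_eq]
      intro h0
      apply hy
      rw [hG]
      dsimp only
      rw [← key, h0]
      simp
    have hGz : Function.support G ⊆ ↑(T z) := by
      intro y hy
      simp only [hT, Set.Finite.coe_toFinset, Set.mem_setOf_eq]
      intro h0
      apply hy
      rw [hG]
      dsimp only
      rw [h0]
      simp
    have hL : (∑ y ∈ T x,
        (DirectSum.lof K C (fun y : C => (y ⟶ x) ⊗[K] M.obj y) y).comp
          (auxMap K M x x y (s.a x y))) (M.map f m) = ∑ᶠ y : C, G y := by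
      rw [LinearMap.sum_apply, finsum_eq_sum_of_support_subset _ hGx]
      refine Finset.sum_congr rfl fun y _ => ?_
      rw [LinearMap.comp_apply, hG]
      dsimp only
      rw [key]
    have hR : (DirectSum.toModule K C (DirectSum C (fun y : C => (y ⟶ x) ⊗[K] M.obj y))
          (fun y => (DirectSum.lof K C (fun y : C => (y ⟶ x) ⊗[K] M.obj y) y).comp
            (LinearMap.rTensor (M.obj y) (Linear.rightComp K y f))))
          ((∑ y ∈ T z,
            (DirectSum.lof K C (fun y : C => (y ⟶ z) ⊗[K] M.obj y) y).comp
              (auxMap K M z z y (s.a z y))) m) = ∑ᶠ y : C, G y := by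
      rw [LinearMap.sum_apply, map_sum, finsum_eq_sum_of_support_subset _ hGz]
      refine Finset.sum_congr rfl fun y _ => ?_
      rw [LinearMap.comp_apply, DirectSum.toModule_lof, LinearMap.comp_apply]
    rw [hL, ← hR]
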